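/- Let G be a monoid acting on a set X, let x_0∈X, and let κ be an infinite cardinal such that the cardinality of G is at most κ and every family 𝒰 of ζ_G-open sets with ⋂𝒰 = {x_0} has cardinality at least κ (i.e., κ ≤ ψ(x_0, ζ_G)), where ζ_G is the Zariski G-topology. Then for every infinite cardinal λ ≤ cf(κ), the set of topologies τ on X that are normal G-topologies with pseudocharacter ψ(x_0,τ) = λ at the point x_0 has cardinality at least 2^(2^κ). -/

import Mathlib

set_option linter.unusedSectionVars false
set_option linter.unusedVariables false

open Topology Cardinal Set

universe u

/-- The Zariski `G`-topology on a `G`-act `X`. -/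
def zariskiGTopology (G X : Type*) [Monoid G] [MulAction G X] : TopologicalSpace X :=
  TopologicalSpace.generateFrom
    ({S : Set X | ∃ f g : G, S = {x : X | f • x ≠ g • x}} ∪
     {S : Set X | ∃ (f : G) (c : X), S = {x : X | f • x ≠ c}})

namespace ZGT

variable {G X : Type u} [Monoid G] [MulAction G X]

abbrev R (κ : Cardinal.{u}) : Type u := κ.ord.ToType

open scoped Classical in
/-- Length budget at stage `ζ` : number of predecessors if finite, else `⊤`. -/
noncomputable def nfun {κ : Cardinal.{u}} (ζ : R κ) : ℕ∞ :=
  if h : (Set.Iio ζ).Finite then (h.toFinset.card : ℕ∞) else ⊤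

lemma nfun_mono {κ : Cardinal.{u}} {ζ ζ' : R κ} (h : ζ ≤ ζ') : nfun ζ ≤ nfun ζ' := by
  classical
  unfold nfun
  by_cases h' : (Set.Iio ζ').Finite
  · have hsub : Set.Iio ζ ⊆ Set.Iio ζ' := fun x hx => lt_of_lt_of_le hx h
    have hζ : (Set.Iio ζ).Finite := h'.subset hsub
    rw [dif_pos hζ, dif_pos h']
    exact_mod_cast Finset.card_le_card (by
      intro x hx
      simp only [Set.Finite.mem_toFinset] at hx ⊢
      exact hsub hx)
  · rw [dif_neg h']
    exact le_top

lemma nfun_of_finite {κ : Cardinal.{u}} {ζ : R κ} (h : (Set.Iio ζ).Finite) :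
    nfun ζ = (h.toFinset.card : ℕ∞) := by
  unfold nfun; exact dif_pos h

lemma nfun_of_infinite {κ : Cardinal.{u}} {ζ : R κ} (h : ¬ (Set.Iio ζ).Finite) :
    nfun ζ = ⊤ := by
  unfold nfun; exact dif_neg h

variable (κ : Cardinal.{u}) (σ : G → R κ)

/-- Stage sets with slack `k`. -/
def Gst (k : ℕ) (ζ : R κ) : Set G :=
  {g | ∃ l : List G, (∀ h ∈ l, σ h < ζ) ∧ g = l.prod ∧ (l.length + k : ℕ∞) ≤ nfun ζ}

lemma Gst_mono_stage {k : ℕ} {ζ ζ' : R κ} (h : ζ ≤ ζ') : Gst κ σ k ζ ⊆ Gst κ σ k ζ' := by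
  rintro g ⟨l, hl, rfl, hlen⟩
  exact ⟨l, fun x hx => lt_of_lt_of_le (hl x hx) h, rfl, hlen.trans (nfun_mono h)⟩

lemma Gst_anti_slack {k k' : ℕ} (hk : k ≤ k') {ζ : R κ} : Gst κ σ k' ζ ⊆ Gst κ σ k ζ := by
  rintro g ⟨l, hl, rfl, hlen⟩
  refine ⟨l, hl, rfl, le_trans ?_ hlen⟩
  exact_mod_cast add_le_add_right (by exact_mod_cast Nat.cast_le.2 hk) _

lemma one_mem_Gst {k : ℕ} {ζ : R κ} (h : (k : ℕ∞) ≤ nfun ζ) : (1 : G) ∈ Gst κ σ k ζ :=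
  ⟨[], by simp, by simp, by simpa using h⟩

lemma mul_mem_Gst {k : ℕ} {ζ : R κ} {g m : G} (hg : σ g < ζ) (hm : m ∈ Gst κ σ (k + 1) ζ) :
    g * m ∈ Gst κ σ k ζ := by
  obtain ⟨l, hl, rfl, hlen⟩ := hm
  refine ⟨g :: l, ?_, by simp, ?_⟩
  · intro x hx
    rcases List.mem_cons.1 hx with rfl | hx
    · exact hg
    · exact hl x hx
  · refine le_trans (le_of_eq ?_) hlen
    simp only [List.length_cons]
    push_cast
    ring

/-- Cardinality bound for stage sets. -/
lemma mk_Gst_lt (hκ : ℵ₀ ≤ κ) (hσ : Function.Injective σ) (k : ℕ) (ζ : R κ) :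
    #(Gst κ σ k ζ) < κ := by
  classical
  set S : Set G := {g | σ g < ζ} with hS
  have hSle : #S ≤ #(Set.Iio ζ) := by
    refine mk_le_of_injective (f := fun g => (⟨σ g.1, g.2⟩ : Set.Iio ζ)) ?_
    intro a b hab
    exact Subtype.ext (hσ (by simpa using congrArg Subtype.val hab))
  have hIio : #(Set.Iio ζ) < κ := Cardinal.mk_Iio_ord_toType ζ
  by_cases hfin : (Set.Iio ζ).Finite
  · have hSfin : S.Finite := hfin.preimage hσ.injOn
    haveI : Finite S := hSfin.to_subtype
    set N : ℕ := hfin.toFinset.card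
    have hbud : nfun ζ = (N : ℕ∞) := by unfold nfun; rw [dif_pos hfin]
    have hGfin : (Gst κ σ k ζ).Finite := by
      have hls : {l : List S | l.length ≤ N}.Finite := List.finite_length_le (↥S) N
      have himg : (Gst κ σ k ζ) ⊆
          (fun l : List S => (l.map Subtype.val).prod) '' {l : List S | l.length ≤ N} := by
        rintro g ⟨l, hl, rfl, hlen⟩
        have hmem : ∀ x ∈ l, x ∈ S := fun x hx => hl x hx
        refine ⟨l.pmap (fun x hx => (⟨x, hx⟩ : S)) hmem, ?_, ?_⟩
        · simp only [Set.mem_setOf_eq, List.length_pmap]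
          rw [hbud] at hlen
          have h1 : (l.length : ℕ∞) ≤ (N : ℕ∞) :=
            le_trans (le_add_of_nonneg_right (by positivity)) hlen
          exact_mod_cast h1
        · simp [List.map_pmap]
      exact (hls.image _).subset himg
    exact lt_of_lt_of_le hGfin.lt_aleph0 hκ
  · have hinf : ℵ₀ ≤ #(Set.Iio ζ) :=
      Cardinal.infinite_iff.1 (Set.infinite_coe_iff.2 hfin)
    have hsub : (Gst κ σ k ζ) ⊆ Set.range (fun l : List S => (l.map Subtype.val).prod) := by
      rintro g ⟨l, hl, rfl, hlen⟩
      have hmem : ∀ x ∈ l, x ∈ S := fun x hx => hl x hx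
      exact ⟨l.pmap (fun x hx => (⟨x, hx⟩ : S)) hmem, by simp [List.map_pmap]⟩
    calc #(Gst κ σ k ζ) ≤ #(Set.range (fun l : List S => (l.map Subtype.val).prod)) :=
            Cardinal.mk_le_mk_of_subset hsub
      _ ≤ #(List S) := Cardinal.mk_range_le
      _ ≤ max ℵ₀ #S := Cardinal.mk_list_le_max _
      _ ≤ max ℵ₀ #(Set.Iio ζ) := max_le_max le_rfl hSle
      _ = #(Set.Iio ζ) := max_eq_right hinf
      _ < κ := hIio



variable (x₀ : X)

/-- Seen points at stage `ζ`, given the values `f` of the recursion below `ζ`. -/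
def PsetF (ζ : R κ) (f : ∀ η : R κ, η < ζ → X) : Set X :=
  {x₀} ∪ {c | ∃ m ∈ Gst κ σ 0 ζ, ∃ η, ∃ h : η < ζ, c = m • f η h} ∪
    {c | ∃ m ∈ Gst κ σ 0 ζ, c = m • x₀}

/-- The requirements on the point chosen at stage `ζ`. -/
def StepOK (ζ : R κ) (f : ∀ η : R κ, η < ζ → X) (p : X) : Prop :=
  p ≠ x₀ ∧
  (∀ g₁ ∈ Gst κ σ 0 ζ, ∀ g₂ ∈ Gst κ σ 0 ζ, g₁ • x₀ ≠ g₂ • x₀ → g₁ • p ≠ g₂ • p) ∧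
  (∀ g ∈ Gst κ σ 0 ζ, ∀ c ∈ PsetF κ σ x₀ ζ f, c ≠ g • x₀ → g • p ≠ c)

section Exists
variable (hκ : ℵ₀ ≤ κ)
  (hψ : ∀ 𝒰 : Set (Set X), (∀ U ∈ 𝒰, IsOpen[zariskiGTopology G X] U) →
      ⋂₀ 𝒰 = {x₀} → κ ≤ #𝒰)
include hκ hψ

omit hκ in
lemma exists_pt (𝒱 : Set (Set X)) (hop : ∀ V ∈ 𝒱, IsOpen[zariskiGTopology G X] V)
    (hx : ∀ V ∈ 𝒱, x₀ ∈ V) (hcard : #𝒱 < κ) : ∃ p, p ∈ ⋂₀ 𝒱 ∧ p ≠ x₀ := by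
  by_contra hcon
  push_neg at hcon
  have h1 : ⋂₀ 𝒱 = {x₀} := by
    apply Set.eq_singleton_iff_unique_mem.2
    exact ⟨fun V hV => hx V hV, fun p hp => by by_contra hne; exact hne (hcon p hp)⟩
  exact absurd (hψ 𝒱 hop h1) (not_le.2 hcard)

lemma step_exists (hσ : Function.Injective σ) (ζ : R κ) (f : ∀ η : R κ, η < ζ → X) :
    ∃ p, StepOK κ σ x₀ ζ f p := by
  classical
  have hGzlt : #(Gst κ σ 0 ζ) < κ := mk_Gst_lt κ σ hκ hσ 0 ζ
  have hIio : #(Set.Iio ζ) < κ := Cardinal.mk_Iio_ord_toType ζ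
  have hPlt : #(PsetF κ σ x₀ ζ f) < κ := by
    let F0 : PUnit.{u+1} ⊕ (↥(Gst κ σ 0 ζ) × ↥(Set.Iio ζ)) ⊕ ↥(Gst κ σ 0 ζ) → X := fun w =>
      match w with
      | Sum.inl _ => x₀
      | Sum.inr (Sum.inl q) => (q.1 : G) • f q.2.1 q.2.2
      | Sum.inr (Sum.inr m) => (m : G) • x₀
    have hsub : PsetF κ σ x₀ ζ f ⊆ Set.range F0 := by
      intro c hc
      rcases hc with (hc | hc) | hc
      · exact ⟨Sum.inl PUnit.unit, hc.symm⟩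
      · obtain ⟨m, hm, η, hη, rfl⟩ := hc
        exact ⟨Sum.inr (Sum.inl ⟨⟨m, hm⟩, ⟨η, hη⟩⟩), rfl⟩
      · obtain ⟨m, hm, rfl⟩ := hc
        exact ⟨Sum.inr (Sum.inr ⟨m, hm⟩), rfl⟩
    refine lt_of_le_of_lt (le_trans (Cardinal.mk_le_mk_of_subset hsub) Cardinal.mk_range_le) ?_
    rw [Cardinal.mk_sum, Cardinal.mk_sum, Cardinal.mk_prod]
    simp only [Cardinal.lift_id, Cardinal.mk_punit]
    refine Cardinal.add_lt_of_lt hκ (lt_of_lt_of_le Cardinal.one_lt_aleph0 hκ) ?_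
    exact Cardinal.add_lt_of_lt hκ (Cardinal.mul_lt_of_lt hκ hGzlt hIio) hGzlt
  set I1 := {q : ↥(Gst κ σ 0 ζ) × ↥(Gst κ σ 0 ζ) // (q.1 : G) • x₀ ≠ (q.2 : G) • x₀} with hI1
  set I2 := {q : ↥(Gst κ σ 0 ζ) × ↥(PsetF κ σ x₀ ζ f) // (q.2 : X) ≠ (q.1 : G) • x₀} with hI2
  set 𝒱 : Set (Set X) :=
    Set.range (fun q : I1 => {x : X | (q.1.1 : G) • x ≠ (q.1.2 : G) • x}) ∪
    Set.range (fun q : I2 => {x : X | (q.1.1 : G) • x ≠ (q.1.2 : X)}) with h𝒱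
  have hcard : #𝒱 < κ := by
    refine lt_of_le_of_lt (Cardinal.mk_union_le _ _) (Cardinal.add_lt_of_lt hκ ?_ ?_)
    · refine lt_of_le_of_lt Cardinal.mk_range_le ?_
      refine lt_of_le_of_lt (Cardinal.mk_subtype_le _) ?_
      rw [Cardinal.mk_prod]; simp only [Cardinal.lift_id]
      exact Cardinal.mul_lt_of_lt hκ hGzlt hGzlt
    · refine lt_of_le_of_lt Cardinal.mk_range_le ?_
      refine lt_of_le_of_lt (Cardinal.mk_subtype_le _) ?_
      rw [Cardinal.mk_prod]; simp only [Cardinal.lift_id]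
      exact Cardinal.mul_lt_of_lt hκ hGzlt hPlt
  have hop : ∀ V ∈ 𝒱, IsOpen[zariskiGTopology G X] V := by
    unfold zariskiGTopology
    rintro V (⟨q, rfl⟩ | ⟨q, rfl⟩)
    · exact TopologicalSpace.isOpen_generateFrom_of_mem (Or.inl ⟨_, _, rfl⟩)
    · exact TopologicalSpace.isOpen_generateFrom_of_mem (Or.inr ⟨_, _, rfl⟩)
  have hx : ∀ V ∈ 𝒱, x₀ ∈ V := by
    rintro V (⟨q, rfl⟩ | ⟨q, rfl⟩)
    · exact q.2
    · exact fun h => q.2 h.symm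
  obtain ⟨p, hp, hpne⟩ := exists_pt κ x₀ hψ 𝒱 hop hx hcard
  refine ⟨p, hpne, ?_, ?_⟩
  · intro g₁ hg₁ g₂ hg₂ hne
    exact hp _ (Or.inl ⟨⟨⟨⟨g₁, hg₁⟩, ⟨g₂, hg₂⟩⟩, hne⟩, rfl⟩)
  · intro g hg c hc hne
    exact hp _ (Or.inr ⟨⟨⟨⟨g, hg⟩, ⟨c, hc⟩⟩, hne⟩, rfl⟩)

end Exists

/-- The core data: an enumeration of `G` and a transfinite sequence of generic points. -/
structure Core (x₀ : X) (κ : Cardinal.{u}) : Type u where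
  σ : G → R κ
  σinj : Function.Injective σ
  t : R κ → X
  ok : ∀ ζ, StepOK κ σ x₀ ζ (fun η _ => t η) (t ζ)

lemma core_exists (hκ : ℵ₀ ≤ κ) (hG : #G ≤ κ)
    (hψ : ∀ 𝒰 : Set (Set X), (∀ U ∈ 𝒰, IsOpen[zariskiGTopology G X] U) →
      ⋂₀ 𝒰 = {x₀} → κ ≤ #𝒰) : Nonempty (Core (G := G) x₀ κ) := by
  have hR : #(R κ) = κ := by rw [Cardinal.mk_toType, Cardinal.card_ord]
  obtain ⟨σe⟩ : Nonempty (G ↪ R κ) := by rw [← Cardinal.le_def, hR]; exact hG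
  let F : ∀ ζ : R κ, (∀ η, η < ζ → X) → X := fun ζ f =>
    (step_exists κ σe x₀ hκ hψ σe.injective ζ f).choose
  let t : R κ → X := WellFounded.fix wellFounded_lt F
  have ht : ∀ ζ, t ζ = F ζ (fun η _ => t η) := fun ζ => WellFounded.fix_eq _ _ _
  refine ⟨⟨σe, σe.injective, t, fun ζ => ?_⟩⟩
  have hspec := (step_exists κ σe x₀ hκ hψ σe.injective ζ (fun η _ => t η)).choose_spec
  rw [ht ζ]
  exact hspec



/-! ### Representations, canonical parents and chains -/

section Reps
variable {x₀ : X} {κ : Cardinal.{u}}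
variable [Nonempty (R κ)] (C : Core (G := G) x₀ κ)

/-- `p` is represented at stage `ζ` by `m` (with slack `k`). -/
def vRep (k : ℕ) (p : X) (m : G) (ζ : R κ) : Prop :=
  m ∈ Gst κ C.σ k ζ ∧ m • C.t ζ = p ∧ m • x₀ ≠ p

lemma vRep.weaken {k k' : ℕ} (hk : k' ≤ k) {p m ζ} (h : vRep C k p m ζ) : vRep C k' p m ζ :=
  ⟨Gst_anti_slack κ C.σ hk h.1, h.2⟩

lemma t_ne (ζ : R κ) : C.t ζ ≠ x₀ := (C.ok ζ).1

/-- The seen-points set of the core. -/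
def Pts (ζ : R κ) : Set X := PsetF κ C.σ x₀ ζ (fun η _ => C.t η)

lemma pt_constraint {ζ : R κ} {g : G} (hg : g ∈ Gst κ C.σ 0 ζ) {c : X}
    (hc : c ∈ Pts C ζ) (hne : c ≠ g • x₀) : g • C.t ζ ≠ c :=
  (C.ok ζ).2.2 g hg c hc hne

lemma sep_constraint {ζ : R κ} {g₁ g₂ : G} (h₁ : g₁ ∈ Gst κ C.σ 0 ζ)
    (h₂ : g₂ ∈ Gst κ C.σ 0 ζ) (hne : g₁ • x₀ ≠ g₂ • x₀) : g₁ • C.t ζ ≠ g₂ • C.t ζ :=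
  (C.ok ζ).2.1 g₁ h₁ g₂ h₂ hne

lemma mem_Pts_base (ζ : R κ) : x₀ ∈ Pts C ζ := Or.inl (Or.inl rfl)

lemma mem_Pts_img {ζ η : R κ} {m : G} (hm : m ∈ Gst κ C.σ 0 ζ) (hη : η < ζ) :
    m • C.t η ∈ Pts C ζ := Or.inl (Or.inr ⟨m, hm, η, hη, rfl⟩)

lemma mem_Pts_orb {ζ : R κ} {m : G} (hm : m ∈ Gst κ C.σ 0 ζ) :
    m • x₀ ∈ Pts C ζ := Or.inr ⟨m, hm, rfl⟩

/-- Uniqueness of representations: the stage and the parent are determined. -/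
lemma rep_unique {p : X} {m m' : G} {ζ ζ' : R κ}
    (h : vRep C 0 p m ζ) (h' : vRep C 0 p m' ζ') : ζ = ζ' ∧ m • x₀ = m' • x₀ := by
  have key : ∀ {n n' : G} {ξ ξ' : R κ}, vRep C 0 p n ξ → vRep C 0 p n' ξ' → ¬ ξ' < ξ := by
    intro n n' ξ ξ' h h' hlt
    have hmem : n' • C.t ξ' ∈ Pts C ξ :=
      mem_Pts_img C (Gst_mono_stage κ C.σ hlt.le h'.1) hlt
    rw [h'.2.1] at hmem
    exact pt_constraint C h.1 hmem (Ne.symm h.2.2) h.2.1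
  have hζζ' : ζ = ζ' := le_antisymm (not_lt.1 (key h h')) (not_lt.1 (key h' h))
  subst hζζ'
  refine ⟨rfl, ?_⟩
  by_contra hne
  exact sep_constraint C h.1 h'.1 hne (h.2.1.trans h'.2.1.symm)

/-- `p` has a (slack-0) representation. -/
def hasRep (p : X) : Prop := ∃ q : G × R κ, vRep C 0 p q.1 q.2

open scoped Classical in
noncomputable def idx (p : X) : R κ :=
  if h : hasRep C p then h.choose.2 else Classical.arbitrary _

open scoped Classical in
noncomputable def par (p : X) : X :=
  if h : hasRep C p then h.choose.1 • x₀ else x₀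

lemma idx_par_eq {k : ℕ} {p : X} {m : G} {ζ : R κ} (h : vRep C k p m ζ) :
    idx C p = ζ ∧ par C p = m • x₀ := by
  classical
  have h0 : vRep C 0 p m ζ := vRep.weaken C (Nat.zero_le k) h
  have hrep : hasRep C p := ⟨(m, ζ), h0⟩
  have hspec := hrep.choose_spec
  obtain ⟨h1, h2⟩ := rep_unique C hspec h0
  constructor
  · rw [idx, dif_pos hrep]; exact h1
  · rw [par, dif_pos hrep]; exact h2

lemma x₀_no_rep : ¬ hasRep C x₀ := by
  rintro ⟨⟨m, ζ⟩, hm, hsm, hne⟩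
  exact pt_constraint C hm (mem_Pts_base C ζ) (Ne.symm hne) hsm

lemma t_rep {k : ℕ} {ζ : R κ} (hk : (k : ℕ∞) ≤ nfun ζ) : vRep C k (C.t ζ) 1 ζ :=
  ⟨one_mem_Gst κ C.σ hk, one_smul _ _, by rw [one_smul]; exact (t_ne C ζ).symm⟩

/-- The step relation of chains: `b` is a child of `a` with index in `B` and slack `k`. -/
def rel (B : Set (R κ)) (k : ℕ) (a b : X) : Prop :=
  ∃ m ζ, vRep C k b m ζ ∧ m • x₀ = a ∧ ζ ∈ B

/-- The chain orbit of `γ`. -/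
def Orb (B : Set (R κ)) (k : ℕ) (γ : X) : Set X :=
  {p | Relation.ReflTransGen (rel C B k) γ p}

lemma rel_le {B B' : Set (R κ)} {k k' : ℕ} (hB : B ⊆ B') (hk : k' ≤ k) :
    rel C B k ≤ rel C B' k' := by
  rintro a b ⟨m, ζ, hrep, rfl, hζ⟩
  exact ⟨m, ζ, vRep.weaken C hk hrep, rfl, hB hζ⟩

lemma Orb_mono {B B' : Set (R κ)} {k k' : ℕ} (hB : B ⊆ B') (hk : k' ≤ k) {γ : X} :
    Orb C B k γ ⊆ Orb C B' k' γ :=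
  fun _ hp => Relation.ReflTransGen.mono (rel_le C hB hk) _ _ hp

lemma self_mem_Orb {B : Set (R κ)} {k : ℕ} {γ : X} : γ ∈ Orb C B k γ :=
  Relation.ReflTransGen.refl

lemma Orb_trans {B : Set (R κ)} {k : ℕ} {γ δ : X} (h : δ ∈ Orb C B k γ) :
    Orb C B k δ ⊆ Orb C B k γ := fun _ hp => Relation.ReflTransGen.trans h hp

lemma rel_spec {B : Set (R κ)} {k : ℕ} {a b : X} (h : rel C B k a b) :
    hasRep C b ∧ par C b = a ∧ idx C b ∈ B ∧ b ≠ a := by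
  obtain ⟨m, ζ, hrep, rfl, hζ⟩ := h
  obtain ⟨h1, h2⟩ := idx_par_eq C hrep
  exact ⟨⟨(m, ζ), vRep.weaken C (Nat.zero_le k) hrep⟩, h2, h1 ▸ hζ, fun h => hrep.2.2 h.symm⟩

lemma mem_Orb_cases {B : Set (R κ)} {k : ℕ} {γ p : X} (h : p ∈ Orb C B k γ) :
    p = γ ∨ (hasRep C p ∧ idx C p ∈ B) := by
  rcases Relation.ReflTransGen.cases_tail h with h | ⟨c, _, hc⟩
  · exact Or.inl h
  · obtain ⟨h1, _, h3, _⟩ := rel_spec C hc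
    exact Or.inr ⟨h1, h3⟩

lemma x₀_chain_end {B : Set (R κ)} {k : ℕ} {γ : X} (h : x₀ ∈ Orb C B k γ) : γ = x₀ := by
  rcases Relation.ReflTransGen.cases_tail h with h | ⟨c, _, hc⟩
  · exact h.symm
  · exact absurd (rel_spec C hc).1 (x₀_no_rep C)

lemma t_mem_Orb_x₀_iff {B : Set (R κ)} {k : ℕ} {ζ : R κ} (hk : (k : ℕ∞) ≤ nfun ζ) :
    C.t ζ ∈ Orb C B k x₀ ↔ ζ ∈ B := by
  constructor
  · intro h
    rcases mem_Orb_cases C h with h | ⟨_, h2⟩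
    · exact absurd h (t_ne C ζ)
    · rwa [(idx_par_eq C (t_rep C hk)).1] at h2
  · intro hζ
    exact Relation.ReflTransGen.single ⟨1, ζ, t_rep C hk, one_smul _ _, hζ⟩

/-- Parent stage strictly decreases. -/
lemma par_lt {p : X} {m m' : G} {ζ ζ' : R κ} (h : vRep C 0 p m ζ)
    (h' : vRep C 0 (m • x₀) m' ζ') : ζ' < ζ := by
  by_contra hle
  push_neg at hle
  have hmem : m • x₀ ∈ Pts C ζ' := mem_Pts_orb C (Gst_mono_stage κ C.σ hle h.1)
  exact pt_constraint C h'.1 hmem (Ne.symm h'.2.2) h'.2.1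

lemma rel_idx_lt {B : Set (R κ)} {k : ℕ} {a b : X} (hab : rel C B k a b)
    (ha : hasRep C a) : idx C a < idx C b := by
  obtain ⟨m, ζ, hrep, rfl, _⟩ := hab
  obtain ⟨⟨m', ζ'⟩, h'⟩ := ha
  have h1 := (idx_par_eq C h').1
  have h2 := (idx_par_eq C hrep).1
  rw [h1, h2]
  exact par_lt C (vRep.weaken C (Nat.zero_le k) hrep) h'

/-- Chains with the same endpoint are comparable (unique parents). -/
lemma merge {B₁ B₂ : Set (R κ)} {k₁ k₂ : ℕ} {γ δ p : X}
    (h₁ : Relation.ReflTransGen (rel C B₁ k₁) γ p)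
    (h₂ : Relation.ReflTransGen (rel C B₂ k₂) δ p) :
    Relation.ReflTransGen (rel C B₁ k₁) γ δ ∨ Relation.ReflTransGen (rel C B₂ k₂) δ γ := by
  induction h₁ with
  | refl =>
    exact Or.inr h₂
  | @tail q p' hγq hqp' IH =>
    rcases Relation.ReflTransGen.cases_tail h₂ with h | ⟨q₂, hδq₂, hq₂p'⟩
    · subst h
      exact Or.inl (Relation.ReflTransGen.tail hγq hqp')
    · have hq : q₂ = q := by
        have e1 := (rel_spec C hqp').2.1
        have e2 := (rel_spec C hq₂p').2.1
        rw [← e1, ← e2]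
      rw [hq] at hδq₂
      exact IH hδq₂
  
lemma Orb_rank {B : Set (R κ)} {k : ℕ} {γ : X} : ∀ {p}, p ∈ Orb C B k γ → p ≠ γ →
    hasRep C p ∧ (hasRep C γ → idx C γ < idx C p) := by
  intro p h
  induction h with
  | refl => intro h; exact absurd rfl h
  | @tail q p' hγq hqp' IH =>
    intro _
    refine ⟨(rel_spec C hqp').1, fun hγ => ?_⟩
    by_cases hqγ : q = γ
    · subst hqγ; exact rel_idx_lt C hqp' hγ
    · obtain ⟨hq, hlt⟩ := IH hqγ
      exact lt_trans (hlt hγ) (rel_idx_lt C hqp' hq)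

open scoped Classical in
/-- The rank of a point: its index if it has a representation, else `⊥`. -/
noncomputable def mrk (p : X) : WithBot (R κ) :=
  if hasRep C p then (idx C p : WithBot (R κ)) else ⊥

lemma mrk_lt_of_Orb {B : Set (R κ)} {k : ℕ} {γ p : X} (h : p ∈ Orb C B k γ)
    (hne : p ≠ γ) : mrk C γ < mrk C p := by
  classical
  obtain ⟨hp, hlt⟩ := Orb_rank C h hne
  simp only [mrk]
  rw [if_pos hp]
  by_cases hγ : hasRep C γ
  · rw [if_pos hγ]
    exact_mod_cast hlt hγ
  · rw [if_neg hγ]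
    exact bot_lt_iff_ne_bot.2 (by simp)

end Reps


/-! ### The independent family and the filters -/

section Filters
variable (κ μ : Cardinal.{u})

/-- The index type of the Fichtenholz–Kantorovich–Hausdorff independent family. -/
def Yt : Type u := Finset κ.out × Finset (Finset κ.out)

instance : Nonempty (Yt κ) := ⟨(∅, ∅)⟩

/-- The independent family. -/
def FA (S : Set κ.out) : Set (Yt κ) :=
  {y | ∃ s ∈ y.2, (↑s : Set κ.out) = (↑y.1 : Set κ.out) ∩ S}

/-- The common point of all members of the family. -/
def y₀ : Yt κ := (∅, {∅})

lemma y₀_mem_FA (S : Set κ.out) : y₀ κ ∈ FA κ S := ⟨∅, by simp [y₀], by simp [y₀]⟩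

/-- Independence: a point in finitely many members but not in a given other member. -/
lemma FA_neg {𝒮 : Set (Set κ.out)} (hfin : 𝒮.Finite) {S : Set κ.out} (hS : S ∉ 𝒮) :
    ∃ y : Yt κ, (∀ S' ∈ 𝒮, y ∈ FA κ S') ∧ y ∉ FA κ S := by
  classical
  have hex : ∀ S' : 𝒮, (symmDiff (S' : Set κ.out) S).Nonempty := by
    intro S'
    rw [Set.symmDiff_nonempty]
    intro h
    exact hS (h ▸ S'.2)
  choose b hb using hex
  set F : Finset κ.out := hfin.toFinset.attach.image
      (fun q => b ⟨q.1, hfin.mem_toFinset.1 q.2⟩) with hF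
  set 𝔽 : Finset (Finset κ.out) := hfin.toFinset.attach.image
      (fun q => F.filter (· ∈ (q.1 : Set κ.out))) with h𝔽
  refine ⟨(F, 𝔽), ?_, ?_⟩
  · intro S' hS'
    refine ⟨F.filter (· ∈ S'), ?_, ?_⟩
    · exact Finset.mem_image.2 ⟨⟨S', hfin.mem_toFinset.2 hS'⟩, Finset.mem_attach _ _, rfl⟩
    · ext a
      simp only [Finset.coe_filter, Set.mem_setOf_eq, Set.mem_inter_iff, Finset.mem_coe]
  · rintro ⟨s, hs, hcoe⟩
    simp only [h𝔽, Finset.mem_image] at hs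
    obtain ⟨⟨S', hS'mem⟩, -, rfl⟩ := hs
    have hS'𝒮 : S' ∈ 𝒮 := hfin.mem_toFinset.1 hS'mem
    set q : ↥𝒮 := ⟨S', hS'𝒮⟩ with hq
    have hbF : b q ∈ F := by
      refine Finset.mem_image.2 ⟨⟨S', hS'mem⟩, Finset.mem_attach _ _, rfl⟩
    have hcoe' : (↑F : Set κ.out) ∩ S' = (↑F : Set κ.out) ∩ S := by
      rw [← hcoe]
      ext a
      simp only [Finset.coe_filter, Set.mem_setOf_eq, Set.mem_inter_iff, Finset.mem_coe]
    rcases hb q with ⟨hb1, hb2⟩ | ⟨hb1, hb2⟩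
    · -- b q ∈ S' \ S
      have : b q ∈ (↑F : Set κ.out) ∩ S := hcoe' ▸ ⟨hbF, hb1⟩
      exact hb2 this.2
    · -- b q ∈ S \ S'
      have : b q ∈ (↑F : Set κ.out) ∩ S' := hcoe'.symm ▸ ⟨hbF, hb1⟩
      exact hb2 this.2

/-- Cardinality of the index parts. -/
lemma infinite_out (hκ : ℵ₀ ≤ κ) : Infinite κ.out := by
  rw [Cardinal.infinite_iff, Cardinal.mk_out]; exact hκ

lemma mk_Yt (hκ : ℵ₀ ≤ κ) : #(Yt κ) = κ := by
  haveI : Infinite κ.out := infinite_out κ hκ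
  have h1 : #(Finset κ.out) = κ := by rw [Cardinal.mk_finset_of_infinite, Cardinal.mk_out]
  have h2 : #(Finset (Finset κ.out)) = κ := by rw [Cardinal.mk_finset_of_infinite, h1]
  rw [Yt, Cardinal.mk_prod, Cardinal.lift_id, Cardinal.lift_id, h1, h2,
    Cardinal.mul_eq_self hκ]

lemma exists_equiv (hκ : ℵ₀ ≤ κ) (hμ : ℵ₀ ≤ μ) (hμκ : μ ≤ κ) :
    Nonempty (R κ ≃ μ.out × Yt κ × κ.out) := by
  apply Cardinal.eq.1
  rw [Cardinal.mk_toType, Cardinal.card_ord, Cardinal.mk_prod, Cardinal.mk_prod,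
    Cardinal.lift_id, Cardinal.lift_id, Cardinal.lift_id, Cardinal.lift_id,
    mk_Yt κ hκ, Cardinal.mk_out, Cardinal.mk_out, Cardinal.mul_eq_self hκ,
    Cardinal.mul_eq_max hμ hκ, max_eq_right hμκ]

variable (e : R κ ≃ μ.out × Yt κ × κ.out)

/-- The generators of the filters: co-singletons, tails, slice complements, and the
(chosen part of the) independent family. -/
def gens (f : Set (Set κ.out)) : Set (Set (R κ)) :=
  {B | ∃ ζ, B = ({ζ}ᶜ : Set (R κ))} ∪ {B | ∃ β, B = Set.Ici β} ∪
    {B | ∃ α, B = {ζ | (e ζ).1 ≠ α}} ∪ {B | ∃ S ∈ f, B = {ζ | (e ζ).2.1 ∈ FA κ S}}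

/-- The filter associated to a subfamily `f` of the independent family. -/
def FF (f : Set (Set κ.out)) : Filter (R κ) := Filter.generate (gens κ μ e f)

lemma mem_FF_of_gens {f : Set (Set κ.out)} {B : Set (R κ)} (h : B ∈ gens κ μ e f) :
    B ∈ FF κ μ e f :=
  Filter.mem_generate_iff.2 ⟨{B}, by simpa using h, Set.finite_singleton _,
    by simp⟩

/-- Union of a `< μ`-indexed family of finite sets is small. -/
lemma mk_small_iUnion {μ : Cardinal.{u}} (hμ : ℵ₀ ≤ μ) {ι : Type u} {A : Type u}
    (s : ι → Set A) (hι : #ι < μ) (hfin : ∀ i, (s i).Finite) : #(⋃ i, s i) < μ := by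
  rcases lt_or_ge (#ι) ℵ₀ with h | h
  · haveI : Finite ι := Cardinal.lt_aleph0_iff_finite.1 h
    have : (⋃ i, s i).Finite := Set.finite_iUnion hfin
    exact lt_of_lt_of_le this.lt_aleph0 hμ
  · refine lt_of_le_of_lt (Cardinal.mk_iUnion_le s) ?_
    have h2 : ⨆ i, #(s i) ≤ ℵ₀ :=
      ciSup_le' fun i => le_of_lt (Set.Finite.lt_aleph0 (hfin i))
    calc #ι * ⨆ i, #(s i) ≤ #ι * ℵ₀ := mul_le_mul_right h2 _
      _ = #ι := (Cardinal.mul_eq_max h le_rfl).trans (max_eq_left h)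
      _ < μ := hι

lemma exists_notin {A : Type u} {S : Set A} (h : #S < #A) : ∃ a, a ∉ S := by
  by_contra hc
  push_neg at hc
  have : S = Set.univ := Set.eq_univ_of_forall hc
  rw [this, Cardinal.mk_univ] at h
  exact lt_irrefl _ h


/-- There are stages with arbitrarily large budget. -/
lemma exists_nfun_ge (hκ : ℵ₀ ≤ κ) (N : ℕ) : ∃ β : R κ, (N : ℕ∞) ≤ nfun β := by
  classical
  haveI hne : Nonempty (R κ) := by
    rw [Ordinal.toType_nonempty_iff_ne_zero]
    intro h
    rw [Cardinal.ord_eq_zero] at h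
    rw [h] at hκ
    exact Cardinal.aleph0_ne_zero (le_zero_iff.1 hκ)
  induction N with
  | zero => exact ⟨Classical.arbitrary _, by simp⟩
  | succ N ih =>
    obtain ⟨β, hβ⟩ := ih
    haveI : NoMaxOrder (R κ) := Cardinal.noMaxOrder hκ
    obtain ⟨β', hβ'⟩ := exists_gt β
    refine ⟨β', ?_⟩
    by_cases hfin : (Set.Iio β').Finite
    · have hfinβ : (Set.Iio β).Finite :=
        hfin.subset (fun x hx => lt_trans hx hβ')
      rw [nfun_of_finite hfinβ] at hβ
      rw [nfun_of_finite hfin]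
      have hN : N ≤ hfinβ.toFinset.card := by exact_mod_cast hβ
      have hsub : insert β hfinβ.toFinset ⊆ hfin.toFinset := by
        intro x hx
        rcases Finset.mem_insert.1 hx with rfl | hx
        · simpa using hβ'
        · simp only [Set.Finite.mem_toFinset] at hx ⊢
          exact lt_trans hx hβ'
      have hβnot : β ∉ hfinβ.toFinset := by simp
      have hcard : N + 1 ≤ hfin.toFinset.card := by
        calc N + 1 ≤ hfinβ.toFinset.card + 1 := by omega
          _ = (insert β hfinβ.toFinset).card := (Finset.card_insert_of_notMem hβnot).symm
          _ ≤ hfin.toFinset.card := Finset.card_le_card hsub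
      exact_mod_cast hcard
    · rw [nfun_of_infinite hfin]
      exact le_top

lemma good_slack (hκ : ℵ₀ ≤ κ) (hμ : ℵ₀ ≤ μ) (hμcf : μ ≤ κ.ord.cof) (K : Set ℕ)
    (hK : K.Infinite → ℵ₀ < μ) : ∃ β : R κ, ∀ ζ, β ≤ ζ → ∀ k ∈ K, (k : ℕ∞) ≤ nfun ζ := by
  classical
  by_cases hbdd : ∃ N, ∀ k ∈ K, k ≤ N
  · obtain ⟨N, hN⟩ := hbdd
    obtain ⟨β, hβ⟩ := exists_nfun_ge κ hκ N
    refine ⟨β, fun ζ hζ k hk => ?_⟩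
    exact le_trans (by exact_mod_cast hN k hk) (hβ.trans (nfun_mono hζ))
  · have hKinf : K.Infinite := by
      intro hfin
      obtain ⟨N, hN⟩ := hfin.bddAbove
      exact hbdd ⟨N, fun k hk => hN hk⟩
    have hμbig : ℵ₀ < μ := hK hKinf
    have hκbig : ℵ₀ < κ := lt_of_lt_of_le hμbig (hμcf.trans (Ordinal.cof_ord_le κ))
    have hex : ∃ ζ₀ : R κ, ¬ (Set.Iio ζ₀).Finite := by
      by_contra hall
      push_neg at hall
      have hinj : Function.Injective (fun ζ : R κ => (hall ζ).toFinset.card) := by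
        intro a b hab
        simp only at hab
        rcases lt_trichotomy a b with h | h | h
        · exfalso
          have hsub : insert a (hall a).toFinset ⊆ (hall b).toFinset := by
            intro x hx
            rcases Finset.mem_insert.1 hx with rfl | hx
            · simpa using h
            · simp only [Set.Finite.mem_toFinset] at hx ⊢
              exact lt_trans hx h
          have : (hall a).toFinset.card + 1 ≤ (hall b).toFinset.card := by
            calc (hall a).toFinset.card + 1 = (insert a (hall a).toFinset).card :=
                (Finset.card_insert_of_notMem (by simp)).symm
              _ ≤ (hall b).toFinset.card := Finset.card_le_card hsub
          omega
        · exact h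
        · exfalso
          have hsub : insert b (hall b).toFinset ⊆ (hall a).toFinset := by
            intro x hx
            rcases Finset.mem_insert.1 hx with rfl | hx
            · simpa using h
            · simp only [Set.Finite.mem_toFinset] at hx ⊢
              exact lt_trans hx h
          have : (hall b).toFinset.card + 1 ≤ (hall a).toFinset.card := by
            calc (hall b).toFinset.card + 1 = (insert b (hall b).toFinset).card :=
                (Finset.card_insert_of_notMem (by simp)).symm
              _ ≤ (hall a).toFinset.card := Finset.card_le_card hsub
          omega
      haveI : Countable (R κ) := ⟨⟨_, hinj⟩⟩
      have hle : #(R κ) ≤ ℵ₀ := Cardinal.mk_le_aleph0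
      rw [Cardinal.mk_toType, Cardinal.card_ord] at hle
      exact absurd hle (not_le.2 hκbig)
    obtain ⟨ζ₀, hζ₀⟩ := hex
    refine ⟨ζ₀, fun ζ hζ k _ => ?_⟩
    have : ¬ (Set.Iio ζ).Finite := fun hf =>
      hζ₀ (hf.subset (fun x hx => lt_of_lt_of_le hx hζ))
    rw [nfun_of_infinite this]
    exact le_top

/-- The master point-selection lemma. -/
lemma master (hκ : ℵ₀ ≤ κ) (hμ : ℵ₀ ≤ μ) (hμcf : μ ≤ κ.ord.cof)
    {f : Set (Set κ.out)} {ι : Type u} (hι : #ι < μ)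
    (T : ι → Set (Set (R κ))) (hTfin : ∀ i, (T i).Finite) (hTsub : ∀ i, T i ⊆ gens κ μ e f)
    (y : Yt κ) (hy : ∀ (S : Set κ.out), S ∈ f →
      (∃ i, {ζ | (e ζ).2.1 ∈ FA κ S} ∈ T i) → y ∈ FA κ S)
    (K : Set ℕ) (hKinf : K.Infinite → ℵ₀ < μ) :
    ∃ ζ, (∀ i, ζ ∈ ⋂₀ T i) ∧ (e ζ).2.1 = y ∧ (∀ k ∈ K, (k : ℕ∞) ≤ nfun ζ) := by
  classical
  have hμκ : μ ≤ κ := le_trans hμcf (Ordinal.cof_ord_le κ)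
  haveI : Infinite κ.out := infinite_out κ hκ
  -- bad singletons
  set BadP : Set (R κ) := ⋃ i, (fun ζ => ({ζ}ᶜ : Set (R κ))) ⁻¹' (T i) with hBadP
  have hBadPlt : #BadP < μ := by
    refine mk_small_iUnion hμ _ hι fun i => ?_
    refine Set.Finite.preimage ?_ (hTfin i)
    intro a _ b _ hab
    have := congrArg (fun s => (sᶜ : Set (R κ))) hab
    simpa using this
  -- bad slices
  set BadS : Set μ.out := ⋃ i, (fun α => {ζ | (e ζ).1 ≠ α}) ⁻¹' (T i) with hBadS
  have hBadSlt : #BadS < μ := by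
    refine mk_small_iUnion hμ _ hι fun i => ?_
    refine Set.Finite.preimage ?_ (hTfin i)
    intro a _ b _ hab
    by_contra hne
    have hab' : {ζ : R κ | (e ζ).1 ≠ a} = {ζ : R κ | (e ζ).1 ≠ b} := by simpa using hab
    have h1 : e.symm (b, y₀ κ, Classical.arbitrary κ.out) ∈ {ζ : R κ | (e ζ).1 ≠ a} := by
      simp only [Set.mem_setOf_eq, Equiv.apply_symm_apply]
      exact fun h => hne h.symm
    rw [hab'] at h1
    simp only [Set.mem_setOf_eq, Equiv.apply_symm_apply] at h1
    exact h1 rfl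
  -- bad tails
  set BadT : Set (R κ) := ⋃ i, (fun β => Set.Ici β) ⁻¹' (T i) with hBadT
  have hBadTlt : #BadT < μ := by
    refine mk_small_iUnion hμ _ hι fun i => ?_
    refine Set.Finite.preimage ?_ (hTfin i)
    intro a _ b _ hab
    have hab' : Set.Ici a = Set.Ici b := by simpa using hab
    have ha : a ∈ Set.Ici b := hab' ▸ Set.self_mem_Ici
    have hb : b ∈ Set.Ici a := hab'.symm ▸ Set.self_mem_Ici
    exact le_antisymm hb ha
  -- a bound for the bad tails
  have hBounded : Set.Bounded (· < ·) BadT := by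
    haveI : IsWellOrder (R κ) (· < ·) := ⟨⟩
    by_contra hnb
    have hcof : IsCofinal BadT := fun a => by
      by_contra h
      push_neg at h
      exact hnb ⟨a, fun b hb => h b hb⟩
    have := Order.cof_le hcof
    rw [Ordinal.cof_toType] at this
    exact absurd (lt_of_lt_of_le hBadTlt hμcf) (not_lt_of_ge this)
  obtain ⟨bd, hbd⟩ := hBounded
  obtain ⟨βs, hβs⟩ := good_slack κ μ hκ hμ hμcf K hKinf
  -- a good slice
  obtain ⟨α', hα'⟩ : ∃ α', α' ∉ BadS :=
    exists_notin (lt_of_lt_of_le hBadSlt (le_of_eq (Cardinal.mk_out μ).symm))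
  -- the pool
  set Pool : Set (R κ) := {ζ | (e ζ).1 = α' ∧ (e ζ).2.1 = y} with hPool
  have hPoolκ : κ ≤ #Pool := by
    have : Function.Injective (fun i : κ.out => (⟨e.symm (α', y, i),
        by refine ⟨?_, ?_⟩ <;> simp⟩ : Pool)) := by
      intro a b hab
      have := congrArg (fun q : Pool => (e (q : R κ)).2.2) hab
      simpa using this
    calc κ = #κ.out := (Cardinal.mk_out κ).symm
      _ ≤ #Pool := Cardinal.mk_le_of_injective this
  have hBadlt : #(BadP ∪ (Set.Iio bd ∪ Set.Iio βs) : Set (R κ)) < κ := by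
    refine lt_of_le_of_lt (Cardinal.mk_union_le _ _)
      (Cardinal.add_lt_of_lt hκ (lt_of_lt_of_le hBadPlt hμκ) ?_)
    exact lt_of_le_of_lt (Cardinal.mk_union_le _ _)
      (Cardinal.add_lt_of_lt hκ (Cardinal.mk_Iio_ord_toType bd) (Cardinal.mk_Iio_ord_toType βs))
  have hnot : ¬ Pool ⊆ (BadP ∪ (Set.Iio bd ∪ Set.Iio βs)) := by
    intro hsub
    exact absurd (le_trans hPoolκ (Cardinal.mk_le_mk_of_subset hsub)) (not_le.2 hBadlt)
  obtain ⟨ζ, hζPool, hζBad⟩ := Set.not_subset.1 hnot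
  have hζβs : βs ≤ ζ := by
    by_contra hlt
    exact hζBad (Or.inr (Or.inr (not_le.1 hlt)))
  refine ⟨ζ, ?_, hζPool.2, fun k hk => hβs ζ hζβs k hk⟩
  intro i V hV
  rcases hTsub i hV with ((⟨ζ', rfl⟩ | ⟨β, rfl⟩) | ⟨α, rfl⟩) | ⟨S, hSf, rfl⟩
  · -- co-singleton
    intro hmem
    have hζζ' : ζ = ζ' := Set.mem_singleton_iff.1 hmem
    subst hζζ'
    exact hζBad (Or.inl (Set.mem_iUnion.2 ⟨i, hV⟩))
  · -- tail
    have hβ : β ∈ BadT := Set.mem_iUnion.2 ⟨i, hV⟩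
    have : β < bd := hbd β hβ
    have hζbd : bd ≤ ζ := by
      by_contra hlt
      exact hζBad (Or.inr (Or.inl (not_le.1 hlt)))
    exact le_of_lt (lt_of_lt_of_le this hζbd)
  · -- slice complement
    have hα : α ∈ BadS := Set.mem_iUnion.2 ⟨i, hV⟩
    intro hcon
    rw [hζPool.1] at hcon
    exact hα' (hcon ▸ hα)
  · -- independent family
    have hyS : y ∈ FA κ S := hy S hSf ⟨i, hV⟩
    show (e ζ).2.1 ∈ FA κ S
    rw [hζPool.2]
    exact hyS

end Filters


/-! ### The topologies -/

/-- The orbit of the base point. -/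
def Orbit (G : Type u) [Monoid G] [MulAction G X] (x₀ : X) : Set X :=
  Set.range (fun m : G => m • x₀)

lemma x₀_mem_Orbit (x₀ : X) : x₀ ∈ Orbit G x₀ := ⟨1, one_smul _ _⟩

lemma smul_mem_Orbit {x₀ p : X} (g : G) (hp : p ∈ Orbit G x₀) : g • p ∈ Orbit G x₀ := by
  obtain ⟨m, rfl⟩ := hp
  exact ⟨g * m, (mul_smul g m x₀).symm ▸ rfl⟩

section Top
variable {x₀ : X} {κ μ : Cardinal.{u}} [Nonempty (R κ)]
variable (C : Core (G := G) x₀ κ) (e : R κ ≃ μ.out × Yt κ × κ.out)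

/-- The basic open sets. -/
def bas (f : Set (Set κ.out)) : Set (Set X) :=
  {U | ∃ q, q ∉ Orbit G x₀ ∧ U = {q}} ∪
  {U | ∃ γ ∈ Orbit G x₀, ∃ B ∈ FF κ μ e f, ∃ k : ℕ, U = Orb C B k γ}

/-- The topology associated to `f`. -/
def tp (f : Set (Set κ.out)) : TopologicalSpace X :=
  TopologicalSpace.generateFrom (bas C e f)

lemma isOpen_iff {f : Set (Set κ.out)} {U : Set X} :
    IsOpen[tp C e f] U ↔
      ∀ γ ∈ U, γ ∈ Orbit G x₀ → ∃ B ∈ FF κ μ e f, ∃ k : ℕ, Orb C B k γ ⊆ U := by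
  constructor
  · intro h
    induction h with
    | basic V hV =>
      rcases hV with ⟨q, hq, rfl⟩ | ⟨δ, hδ, B, hB, k, rfl⟩
      · intro γ hγ hγO
        rw [Set.mem_singleton_iff.1 hγ] at hγO
        exact absurd hγO hq
      · intro γ hγ hγO
        exact ⟨B, hB, k, Orb_trans C hγ⟩
    | univ => exact fun γ _ _ => ⟨Set.univ, Filter.univ_mem, 0, Set.subset_univ _⟩
    | inter U V hU hV IHU IHV =>
      intro γ hγ hγO
      obtain ⟨B₁, hB₁, k₁, h₁⟩ := IHU γ hγ.1 hγO
      obtain ⟨B₂, hB₂, k₂, h₂⟩ := IHV γ hγ.2 hγO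
      refine ⟨B₁ ∩ B₂, Filter.inter_mem hB₁ hB₂, max k₁ k₂, fun p hp => ?_⟩
      exact ⟨h₁ (Orb_mono C Set.inter_subset_left (le_max_left _ _) hp),
        h₂ (Orb_mono C Set.inter_subset_right (le_max_right _ _) hp)⟩
    | sUnion S hS IH =>
      intro γ hγ hγO
      obtain ⟨V, hV, hγV⟩ := hγ
      obtain ⟨B, hB, k, h⟩ := IH V hV γ hγV hγO
      exact ⟨B, hB, k, fun p hp => ⟨V, hV, h hp⟩⟩
  · intro h
    classical
    have hU : U = ⋃₀ {V | V ∈ bas C e f ∧ V ⊆ U} := by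
      apply Set.Subset.antisymm
      · intro p hp
        by_cases hpO : p ∈ Orbit G x₀
        · obtain ⟨B, hB, k, hOrb⟩ := h p hp hpO
          exact ⟨Orb C B k p, ⟨Or.inr ⟨p, hpO, B, hB, k, rfl⟩, hOrb⟩, self_mem_Orb C⟩
        · exact ⟨{p}, ⟨Or.inl ⟨p, hpO, rfl⟩, by simpa using hp⟩, rfl⟩
      · intro p hp
        obtain ⟨V, ⟨_, hVU⟩, hpV⟩ := hp
        exact hVU hpV
    rw [hU]
    exact TopologicalSpace.GenerateOpen.sUnion _
      (fun V hV => TopologicalSpace.GenerateOpen.basic V hV.1)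

/-- Pushing chains forward along the action. -/
lemma chain_push {f : Set (Set κ.out)} {g : G} {B : Set (R κ)} {k : ℕ} {c p : X}
    (h : p ∈ Orb C (B ∩ {ζ | C.σ g < ζ}) (k + 1) c) : g • p ∈ Orb C B k (g • c) := by
  induction h with
  | refl => exact self_mem_Orb C
  | @tail q p' hcq hqp' IH =>
    obtain ⟨m, ζ, hrep, rfl, hζ⟩ := hqp'
    by_cases heq : g • p' = g • (m • x₀)
    · rw [heq]; exact IH
    · refine Relation.ReflTransGen.tail IH ⟨g * m, ζ, ⟨?_, ?_, ?_⟩, ?_, hζ.1⟩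
      · exact mul_mem_Gst κ C.σ hζ.2 hrep.1
      · rw [mul_smul, hrep.2.1]
      · rw [mul_smul]
        intro hcon
        exact heq hcon.symm
      · rw [mul_smul]

lemma tail_mem_FF (hκ : ℵ₀ ≤ κ) {f : Set (Set κ.out)} (g : G) :
    {ζ | C.σ g < ζ} ∈ FF κ μ e f := by
  haveI : NoMaxOrder (R κ) := Cardinal.noMaxOrder hκ
  obtain ⟨β, hβ⟩ := exists_gt (C.σ g)
  refine Filter.mem_of_superset (mem_FF_of_gens κ μ e (Or.inl (Or.inl (Or.inr ⟨β, rfl⟩))))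
    fun ζ hζ => lt_of_lt_of_le hβ hζ

/-- The topologies are `G`-topologies. -/
lemma continuous_smul_tp (hκ : ℵ₀ ≤ κ) {f : Set (Set κ.out)} (g : G) :
    Continuous[tp C e f, tp C e f] (fun p : X => g • p) := by
  rw [continuous_def]
  intro U hU
  rw [isOpen_iff] at hU ⊢
  intro p hp hpO
  obtain ⟨B, hB, k, hOrb⟩ := hU (g • p) hp (smul_mem_Orbit g hpO)
  refine ⟨B ∩ {ζ | C.σ g < ζ}, Filter.inter_mem hB (tail_mem_FF C e hκ g), k + 1,
    fun q hq => ?_⟩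
  exact hOrb (chain_push C (f := f) hq)

/-- The topologies are T1. -/
lemma isClosed_singleton_tp {f : Set (Set κ.out)} (y : X) :
    IsClosed[tp C e f] {y} := by
  refine @IsClosed.mk X (tp C e f) _ ?_
  rw [isOpen_iff]
  intro p hp hpO
  classical
  by_cases hy : hasRep C y
  · refine ⟨({idx C y}ᶜ : Set (R κ)),
      mem_FF_of_gens κ μ e (Or.inl (Or.inl (Or.inl ⟨idx C y, rfl⟩))), 0, fun q hq => ?_⟩
    intro hqy
    rw [Set.mem_singleton_iff.1 hqy] at hq
    rcases mem_Orb_cases C hq with h | ⟨_, h2⟩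
    · exact hp (Set.mem_singleton_iff.2 h.symm)
    · exact h2 rfl
  · refine ⟨Set.univ, Filter.univ_mem, 0, fun q hq => ?_⟩
    intro hqy
    rw [Set.mem_singleton_iff.1 hqy] at hq
    rcases mem_Orb_cases C hq with h | ⟨h1, _⟩
    · exact hp (Set.mem_singleton_iff.2 h.symm)
    · exact hy h1

end Top


/-! ### Normality -/

section Normal
variable {x₀ : X} {κ μ : Cardinal.{u}} [Nonempty (R κ)]
variable (C : Core (G := G) x₀ κ) (e : R κ ≃ μ.out × Yt κ × κ.out)

lemma normal_tp {f : Set (Set κ.out)} (A B : Set X)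
    (hA : IsClosed[tp C e f] A) (hB : IsClosed[tp C e f] B) (hAB : Disjoint A B) :
    ∃ U V : Set X, IsOpen[tp C e f] U ∧ IsOpen[tp C e f] V ∧ A ⊆ U ∧ B ⊆ V ∧
      Disjoint U V := by
  classical
  have havoid : ∀ γ : X, ∃ Bk : Set (R κ) × ℕ, Bk.1 ∈ FF κ μ e f ∧
      (γ ∈ Orbit G x₀ → ((γ ∉ A → Orb C Bk.1 Bk.2 γ ∩ A = ∅) ∧
        (γ ∉ B → Orb C Bk.1 Bk.2 γ ∩ B = ∅))) := by
    intro γ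
    by_cases hγO : γ ∈ Orbit G x₀
    · have hget : ∀ D : Set X, IsClosed[tp C e f] D → γ ∉ D →
          ∃ Bk : Set (R κ) × ℕ, Bk.1 ∈ FF κ μ e f ∧ Orb C Bk.1 Bk.2 γ ∩ D = ∅ := by
        intro D hD hγD
        obtain ⟨B', hB', k, h⟩ := (isOpen_iff C e).1 hD.isOpen_compl γ hγD hγO
        refine ⟨(B', k), hB', ?_⟩
        rw [Set.eq_empty_iff_forall_notMem]
        rintro p ⟨hp1, hp2⟩
        exact (h hp1) hp2
      by_cases hγA : γ ∈ A
      · have hγB : γ ∉ B := fun h => Set.disjoint_left.1 hAB hγA h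
        obtain ⟨Bk, h1, h2⟩ := hget B hB hγB
        exact ⟨Bk, h1, fun _ => ⟨fun h => absurd hγA h, fun _ => h2⟩⟩
      · by_cases hγB : γ ∈ B
        · obtain ⟨Bk, h1, h2⟩ := hget A hA hγA
          exact ⟨Bk, h1, fun _ => ⟨fun _ => h2, fun h => absurd hγB h⟩⟩
        · obtain ⟨Bk1, h11, h12⟩ := hget A hA hγA
          obtain ⟨Bk2, h21, h22⟩ := hget B hB hγB
          refine ⟨(Bk1.1 ∩ Bk2.1, max Bk1.2 Bk2.2), Filter.inter_mem h11 h21,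
            fun _ => ⟨fun _ => ?_, fun _ => ?_⟩⟩
          · rw [Set.eq_empty_iff_forall_notMem]
            rintro p ⟨hp1, hp2⟩
            exact Set.eq_empty_iff_forall_notMem.1 h12 p
              ⟨Orb_mono C Set.inter_subset_left (le_max_left _ _) hp1, hp2⟩
          · rw [Set.eq_empty_iff_forall_notMem]
            rintro p ⟨hp1, hp2⟩
            exact Set.eq_empty_iff_forall_notMem.1 h22 p
              ⟨Orb_mono C Set.inter_subset_right (le_max_right _ _) hp1, hp2⟩
    · exact ⟨(Set.univ, 0), Filter.univ_mem, fun h => absurd h hγO⟩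
  choose WB hWmem hWspec using havoid
  set W : X → Set X := fun γ => Orb C (WB γ).1 (WB γ).2 γ with hWdef
  set hop : X → X → Prop := fun a b => b ∈ W a ∧ b ∈ Orbit G x₀ ∧ b ≠ a with hhop
  set clA : Set X :=
    {γ | ∃ ρ, ρ ∈ A ∧ ρ ∈ Orbit G x₀ ∧ Relation.ReflTransGen hop ρ γ} with hclA
  set clB : Set X :=
    {γ | ∃ ρ, ρ ∈ B ∧ ρ ∈ Orbit G x₀ ∧ Relation.ReflTransGen hop ρ γ} with hclB
  have hclA_orbit : clA ⊆ Orbit G x₀ := by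
    rintro γ ⟨ρ, _, hρO, hchain⟩
    rcases Relation.ReflTransGen.cases_tail hchain with h | ⟨q, _, hq⟩
    · exact h ▸ hρO
    · exact hq.2.1
  have hclB_orbit : clB ⊆ Orbit G x₀ := by
    rintro γ ⟨ρ, _, hρO, hchain⟩
    rcases Relation.ReflTransGen.cases_tail hchain with h | ⟨q, _, hq⟩
    · exact h ▸ hρO
    · exact hq.2.1
  have hdecA : ∀ p ∈ clA, (p ∈ A ∧ p ∈ Orbit G x₀) ∨ ∃ γ ∈ clA, hop γ p := by
    rintro p ⟨ρ, hρA, hρO, hchain⟩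
    rcases Relation.ReflTransGen.cases_tail hchain with h | ⟨q, hq1, hq2⟩
    · subst h; exact Or.inl ⟨hρA, hρO⟩
    · exact Or.inr ⟨q, ⟨ρ, hρA, hρO, hq1⟩, hq2⟩
  have hdecB : ∀ p ∈ clB, (p ∈ B ∧ p ∈ Orbit G x₀) ∨ ∃ γ ∈ clB, hop γ p := by
    rintro p ⟨ρ, hρB, hρO, hchain⟩
    rcases Relation.ReflTransGen.cases_tail hchain with h | ⟨q, hq1, hq2⟩
    · subst h; exact Or.inl ⟨hρB, hρO⟩
    · exact Or.inr ⟨q, ⟨ρ, hρB, hρO, hq1⟩, hq2⟩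
  have hstepA : ∀ γ ∈ clA, ∀ p, hop γ p → p ∈ clA := by
    rintro γ ⟨ρ, h1, h2, h3⟩ p hp
    exact ⟨ρ, h1, h2, h3.tail hp⟩
  have hstepB : ∀ γ ∈ clB, ∀ p, hop γ p → p ∈ clB := by
    rintro γ ⟨ρ, h1, h2, h3⟩ p hp
    exact ⟨ρ, h1, h2, h3.tail hp⟩
  have hmrk : ∀ γ p, hop γ p → mrk C γ < mrk C p := by
    rintro γ p ⟨h1, _, h3⟩
    exact mrk_lt_of_Orb C h1 h3
  have hmerge : ∀ γ δ p, p ∈ W γ → p ∈ W δ → δ ∈ W γ ∨ γ ∈ W δ := by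
    intro γ δ p h1 h2
    exact merge C h1 h2
  have wf : WellFounded (fun a b : X => mrk C a < mrk C b) :=
    InvImage.wf _ wellFounded_lt
  have main : ∀ p : X, (p ∈ clA → p ∈ clB → False) ∧ (p ∈ clA → p ∈ B → False) ∧
      (p ∈ clB → p ∈ A → False) := by
    intro p
    refine wf.induction (C := fun p => (p ∈ clA → p ∈ clB → False) ∧
      (p ∈ clA → p ∈ B → False) ∧ (p ∈ clB → p ∈ A → False)) p ?_
    intro q IH
    have h2 : q ∈ clA → q ∈ B → False := by
      intro hqA hqB
      rcases hdecA q hqA with ⟨hA', _⟩ | ⟨γ, hγ, hhopγ⟩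
      · exact Set.disjoint_left.1 hAB hA' hqB
      · by_cases hγB : γ ∈ B
        · exact (IH γ (hmrk γ q hhopγ)).2.1 hγ hγB
        · have hWB : W γ ∩ B = ∅ := (hWspec γ (hclA_orbit hγ)).2 hγB
          exact Set.eq_empty_iff_forall_notMem.1 hWB q ⟨hhopγ.1, hqB⟩
    have h3 : q ∈ clB → q ∈ A → False := by
      intro hqB hqA
      rcases hdecB q hqB with ⟨hB', _⟩ | ⟨γ, hγ, hhopγ⟩
      · exact Set.disjoint_left.1 hAB hqA hB'
      · by_cases hγA : γ ∈ A
        · exact (IH γ (hmrk γ q hhopγ)).2.2 hγ hγA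
        · have hWA : W γ ∩ A = ∅ := (hWspec γ (hclB_orbit hγ)).1 hγA
          exact Set.eq_empty_iff_forall_notMem.1 hWA q ⟨hhopγ.1, hqA⟩
    refine ⟨?_, h2, h3⟩
    intro hqA hqB
    rcases hdecA q hqA with ⟨hA', _⟩ | ⟨γA, hγA, hhopA'⟩
    · exact h3 hqB hA'
    rcases hdecB q hqB with ⟨hB', _⟩ | ⟨γB, hγB, hhopB'⟩
    · exact h2 hqA hB'
    rcases hmerge γA γB q hhopA'.1 hhopB'.1 with hm | hm
    · by_cases hEq : γB = γA
      · subst hEq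
        exact (IH γB (hmrk _ _ hhopB')).1 hγA hγB
      · have hmem : γB ∈ clA := hstepA γA hγA γB ⟨hm, hclB_orbit hγB, hEq⟩
        exact (IH γB (hmrk _ _ hhopB')).1 hmem hγB
    · by_cases hEq : γA = γB
      · subst hEq
        exact (IH γA (hmrk _ _ hhopA')).1 hγA hγB
      · have hmem : γA ∈ clB := hstepB γB hγB γA ⟨hm, hclA_orbit hγA, hEq⟩
        exact (IH γA (hmrk _ _ hhopA')).1 hγA hmem
  set U : Set X := (A \ Orbit G x₀) ∪ ⋃ γ ∈ clA, W γ with hUdef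
  set V : Set X := (B \ Orbit G x₀) ∪ ⋃ γ ∈ clB, W γ with hVdef
  have hUopen : IsOpen[tp C e f] U := by
    rw [isOpen_iff]
    intro p hp hpO
    have hpclA : p ∈ clA := by
      rcases hp with ⟨_, hnot⟩ | hp
      · exact absurd hpO hnot
      · obtain ⟨γ, hγ, hpW⟩ := Set.mem_iUnion₂.1 hp
        by_cases hpγ : p = γ
        · exact hpγ ▸ hγ
        · exact hstepA γ hγ p ⟨hpW, hpO, hpγ⟩
    exact ⟨(WB p).1, hWmem p, (WB p).2,
      fun q hq => Or.inr (Set.mem_iUnion₂.2 ⟨p, hpclA, hq⟩)⟩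
  have hVopen : IsOpen[tp C e f] V := by
    rw [isOpen_iff]
    intro p hp hpO
    have hpclB : p ∈ clB := by
      rcases hp with ⟨_, hnot⟩ | hp
      · exact absurd hpO hnot
      · obtain ⟨γ, hγ, hpW⟩ := Set.mem_iUnion₂.1 hp
        by_cases hpγ : p = γ
        · exact hpγ ▸ hγ
        · exact hstepB γ hγ p ⟨hpW, hpO, hpγ⟩
    exact ⟨(WB p).1, hWmem p, (WB p).2,
      fun q hq => Or.inr (Set.mem_iUnion₂.2 ⟨p, hpclB, hq⟩)⟩
  have hAU : A ⊆ U := by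
    intro a ha
    by_cases haO : a ∈ Orbit G x₀
    · exact Or.inr (Set.mem_iUnion₂.2 ⟨a, ⟨a, ha, haO, Relation.ReflTransGen.refl⟩,
        self_mem_Orb C⟩)
    · exact Or.inl ⟨ha, haO⟩
  have hBV : B ⊆ V := by
    intro b hb
    by_cases hbO : b ∈ Orbit G x₀
    · exact Or.inr (Set.mem_iUnion₂.2 ⟨b, ⟨b, hb, hbO, Relation.ReflTransGen.refl⟩,
        self_mem_Orb C⟩)
    · exact Or.inl ⟨hb, hbO⟩
  have hdisj : Disjoint U V := by
    rw [Set.disjoint_left]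
    rintro p hpU hpV
    rcases hpU with ⟨hpA, hpO⟩ | hpU
    · rcases hpV with ⟨hpB, _⟩ | hpV
      · exact Set.disjoint_left.1 hAB hpA hpB
      · obtain ⟨δ, hδ, hpW⟩ := Set.mem_iUnion₂.1 hpV
        have hδA : δ ∉ A := fun h => (main δ).2.2 hδ h
        exact Set.eq_empty_iff_forall_notMem.1 ((hWspec δ (hclB_orbit hδ)).1 hδA) p
          ⟨hpW, hpA⟩
    · obtain ⟨γ, hγ, hpWγ⟩ := Set.mem_iUnion₂.1 hpU
      rcases hpV with ⟨hpB, _⟩ | hpV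
      · have hγB : γ ∉ B := fun h => (main γ).2.1 hγ h
        exact Set.eq_empty_iff_forall_notMem.1 ((hWspec γ (hclA_orbit hγ)).2 hγB) p
          ⟨hpWγ, hpB⟩
      · obtain ⟨δ, hδ, hpWδ⟩ := Set.mem_iUnion₂.1 hpV
        rcases hmerge γ δ p hpWγ hpWδ with hm | hm
        · by_cases hEq : δ = γ
          · exact (main γ).1 hγ (hEq ▸ hδ)
          · exact (main δ).1 (hstepA γ hγ δ ⟨hm, hclB_orbit hδ, hEq⟩) hδ
        · by_cases hEq : γ = δ
          · exact (main γ).1 hγ (by rw [hEq]; exact hδ)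
          · exact (main γ).1 hγ (hstepB δ hδ γ ⟨hm, hclA_orbit hγ, hEq⟩)
  exact ⟨U, V, hUopen, hVopen, hAU, hBV, hdisj⟩

end Normal


/-! ### Pseudocharacter -/

section Psi
variable {x₀ : X} {κ μ : Cardinal.{u}} [Nonempty (R κ)]
variable (C : Core (G := G) x₀ κ) (e : R κ ≃ μ.out × Yt κ × κ.out)

/-- Slice complements. -/
def Kc (α : μ.out) : Set (R κ) := {ζ | (e ζ).1 ≠ α}

lemma Kc_mem_FF (f : Set (Set κ.out)) (α : μ.out) : Kc e α ∈ FF κ μ e f :=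
  mem_FF_of_gens κ μ e (Or.inl (Or.inr ⟨α, rfl⟩))

/-- The upper-bound family of neighborhoods of `x₀`. -/
def UB (α : μ.out) : Set X := Orb C (Kc e α) 0 x₀

lemma UB_open (f : Set (Set κ.out)) (α : μ.out) : IsOpen[tp C e f] (UB C e α) :=
  TopologicalSpace.isOpen_generateFrom_of_mem
    (Or.inr ⟨x₀, x₀_mem_Orbit x₀, Kc e α, Kc_mem_FF e f α, 0, rfl⟩)

lemma x₀_mem_UB (α : μ.out) : x₀ ∈ UB C e α := self_mem_Orb C

lemma sInter_UB : ⋂₀ (Set.range (UB C e)) = {x₀} := by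
  apply Set.Subset.antisymm
  · intro p hp
    by_contra hne
    have hpx : p ≠ x₀ := fun h => hne (by simp [h])
    have h1 : ∀ α, p ∈ UB C e α := fun α => hp _ ⟨α, rfl⟩
    have h2 : ∀ α, (e (idx C p)).1 ≠ α := by
      intro α
      rcases mem_Orb_cases C (h1 α) with h | ⟨_, h⟩
      · exact absurd h hpx
      · exact h
    exact h2 _ rfl
  · intro p hp
    rw [Set.mem_singleton_iff] at hp
    subst hp
    rintro U ⟨α, rfl⟩
    exact self_mem_Orb C

lemma UB_inj (hκ : ℵ₀ ≤ κ) : Function.Injective (UB C e) := by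
  intro α α' h
  by_contra hne
  haveI : Infinite κ.out := infinite_out κ hκ
  set ζ' : R κ := e.symm (α', y₀ κ, Classical.arbitrary κ.out) with hζ'
  have hk0 : ((0 : ℕ) : ℕ∞) ≤ nfun ζ' := by simp
  have h1 : C.t ζ' ∈ UB C e α := by
    rw [UB, t_mem_Orb_x₀_iff C hk0]
    show (e ζ').1 ≠ α
    rw [hζ', Equiv.apply_symm_apply]
    exact fun hc => hne hc.symm
  rw [h, UB, t_mem_Orb_x₀_iff C hk0] at h1
  apply h1
  rw [hζ', Equiv.apply_symm_apply]

/-- The lower bound for the pseudocharacter. -/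
lemma LB (hκ : ℵ₀ ≤ κ) (hμ : ℵ₀ ≤ μ) (hμcf : μ ≤ κ.ord.cof) (f : Set (Set κ.out))
    (𝒰 : Set (Set X)) (h1 : ∀ U ∈ 𝒰, IsOpen[tp C e f] U ∧ x₀ ∈ U)
    (h2 : ⋂₀ 𝒰 = {x₀}) : μ ≤ #𝒰 := by
  by_contra hlt
  push_neg at hlt
  have hch : ∀ U : ↥𝒰, ∃ Bk : Set (R κ) × ℕ, Bk.1 ∈ FF κ μ e f ∧
      Orb C Bk.1 Bk.2 x₀ ⊆ (U : Set X) := by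
    rintro ⟨U, hU⟩
    obtain ⟨hop, hx⟩ := h1 U hU
    obtain ⟨B, hB, k, h⟩ := (isOpen_iff C e).1 hop x₀ hx (x₀_mem_Orbit x₀)
    exact ⟨(B, k), hB, h⟩
  choose Bk hBmem hBsub using hch
  have hgen : ∀ U : ↥𝒰, ∃ T : Set (Set (R κ)), T ⊆ gens κ μ e f ∧ T.Finite ∧
      ⋂₀ T ⊆ (Bk U).1 := by
    intro U
    obtain ⟨T, hsub, hfin, h⟩ := Filter.mem_generate_iff.1 (hBmem U)
    exact ⟨T, hsub, hfin, h⟩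
  choose T hTsub hTfin hTss using hgen
  set K : Set ℕ := ⋃ U : ↥𝒰, {(Bk U).2} with hKdef
  have hKinf : K.Infinite → ℵ₀ < μ := by
    intro hinf
    by_contra hle
    push_neg at hle
    have hμeq : μ = ℵ₀ := le_antisymm hle hμ
    haveI : Finite ↥𝒰 := by
      rw [← Cardinal.lt_aleph0_iff_finite]
      rw [hμeq] at hlt
      exact hlt
    exact hinf (Set.finite_iUnion (fun _ => Set.finite_singleton _))
  obtain ⟨ζ, hζT, -, hζK⟩ := master κ μ e hκ hμ hμcf hlt T hTfin hTsub (y₀ κ)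
    (fun S _ _ => y₀_mem_FA κ S) K hKinf
  have hmem : C.t ζ ∈ ⋂₀ 𝒰 := by
    intro U hU
    apply hBsub ⟨U, hU⟩
    rw [t_mem_Orb_x₀_iff C (hζK _ (Set.mem_iUnion.2 ⟨⟨U, hU⟩, rfl⟩))]
    exact hTss ⟨U, hU⟩ (hζT ⟨U, hU⟩)
  rw [h2] at hmem
  exact t_ne C ζ hmem

lemma sInter_all (f : Set (Set κ.out)) :
    ⋂₀ {U : Set X | IsOpen[tp C e f] U ∧ x₀ ∈ U} = {x₀} := by
  apply Set.Subset.antisymm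
  · intro p hp
    by_contra hne
    have hpx : p ≠ x₀ := fun h => hne (by simp [h])
    have hcl := isClosed_singleton_tp C e (f := f) p
    have hx₀ : x₀ ∈ ({p}ᶜ : Set X) := by
      simp only [Set.mem_compl_iff, Set.mem_singleton_iff]
      exact fun h => hpx h.symm
    have := hp _ ⟨hcl.isOpen_compl, hx₀⟩
    simp at this
  · rintro p hp U ⟨hU1, hU2⟩
    rw [Set.mem_singleton_iff] at hp
    subst hp
    exact hU2

lemma psi_eq (hκ : ℵ₀ ≤ κ) (hμ : ℵ₀ ≤ μ) (hμcf : μ ≤ κ.ord.cof) (f : Set (Set κ.out)) :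
    sInf {c : Cardinal.{u} | ∃ 𝒰 : Set (Set X),
      (∀ U ∈ 𝒰, IsOpen[tp C e f] U ∧ x₀ ∈ U) ∧
      ⋂₀ 𝒰 = ⋂₀ {U : Set X | IsOpen[tp C e f] U ∧ x₀ ∈ U} ∧ #𝒰 = c} = μ := by
  have hμmem : μ ∈ {c : Cardinal.{u} | ∃ 𝒰 : Set (Set X),
      (∀ U ∈ 𝒰, IsOpen[tp C e f] U ∧ x₀ ∈ U) ∧
      ⋂₀ 𝒰 = ⋂₀ {U : Set X | IsOpen[tp C e f] U ∧ x₀ ∈ U} ∧ #𝒰 = c} := by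
    refine ⟨Set.range (UB C e), ?_, ?_, ?_⟩
    · rintro U ⟨α, rfl⟩
      exact ⟨UB_open C e f α, x₀_mem_UB C e α⟩
    · rw [sInter_UB C e, sInter_all C e f]
    · rw [Cardinal.mk_range_eq _ (UB_inj C e hκ), Cardinal.mk_out]
  apply le_antisymm
  · exact csInf_le' hμmem
  · refine le_csInf ⟨μ, hμmem⟩ ?_
    rintro c ⟨𝒰, hU, hint, rfl⟩
    rw [sInter_all C e f] at hint
    exact LB C e hκ hμ hμcf f 𝒰 hU hint

end Psi


/-! ### Distinctness -/

section Distinct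
variable {x₀ : X} {κ μ : Cardinal.{u}} [Nonempty (R κ)]
variable (C : Core (G := G) x₀ κ) (e : R κ ≃ μ.out × Yt κ × κ.out)

lemma FA_test (T : Set κ.out) (a : κ.out) :
    ((({a} : Finset κ.out), ({({a} : Finset κ.out)} : Finset (Finset κ.out))) : Yt κ) ∈
      FA κ T ↔ a ∈ T := by
  classical
  constructor
  · rintro ⟨s, hs, hcoe⟩
    simp only [Finset.mem_singleton] at hs
    subst hs
    have : a ∈ (↑({a} : Finset κ.out) : Set κ.out) ∩ T := by
      rw [← hcoe]; simp
    exact this.2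
  · intro haT
    refine ⟨{a}, by simp, ?_⟩
    ext x
    simp only [Finset.coe_singleton, Set.mem_singleton_iff, Set.mem_inter_iff]
    constructor
    · rintro rfl; exact ⟨rfl, haT⟩
    · rintro ⟨rfl, _⟩; rfl

lemma FA_inj : Function.Injective (FA κ) := by
  intro S S' h
  ext a
  rw [← FA_test (κ := κ) S a, ← FA_test (κ := κ) S' a, h]

/-- The lifted independent sets. -/
def AXs (S : Set κ.out) : Set (R κ) := {ζ | (e ζ).2.1 ∈ FA κ S}

lemma AXs_inj (hκ : ℵ₀ ≤ κ) (hμ : ℵ₀ ≤ μ) : Function.Injective (AXs (μ := μ) e) := by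
  haveI : Infinite κ.out := infinite_out κ hκ
  haveI : Infinite μ.out := infinite_out μ hμ
  intro S S' h
  apply FA_inj (κ := κ)
  ext y
  have := Set.ext_iff.1 h (e.symm (Classical.arbitrary μ.out, y, Classical.arbitrary κ.out))
  simpa [AXs] using this

lemma AXs_mem_FF {f : Set (Set κ.out)} {S : Set κ.out} (hS : S ∈ f) :
    AXs e S ∈ FF κ μ e f :=
  mem_FF_of_gens κ μ e (Or.inr ⟨S, hS, rfl⟩)

lemma AXs_not_mem_FF (hκ : ℵ₀ ≤ κ) (hμ : ℵ₀ ≤ μ) (hμcf : μ ≤ κ.ord.cof)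
    {f : Set (Set κ.out)} {S : Set κ.out} (hS : S ∉ f) : AXs e S ∉ FF κ μ e f := by
  classical
  intro hmem
  obtain ⟨T, hTsub, hTfin, hTss⟩ := Filter.mem_generate_iff.1 hmem
  set 𝒮 : Set (Set κ.out) := {S' | S' ∈ f ∧ AXs e S' ∈ T} with h𝒮
  have h𝒮fin : 𝒮.Finite := by
    refine Set.Finite.subset (hTfin.preimage ((AXs_inj e hκ hμ).injOn)) ?_
    intro S' hS'
    exact hS'.2
  have hS𝒮 : S ∉ 𝒮 := fun h => hS h.1
  obtain ⟨y, hy1, hy2⟩ := FA_neg κ h𝒮fin hS𝒮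
  have hpunit : #(PUnit.{u+1}) < μ := by
    rw [Cardinal.mk_punit]
    exact lt_of_lt_of_le Cardinal.one_lt_aleph0 hμ
  obtain ⟨ζ, hζT, hζy, -⟩ := master κ μ e hκ hμ hμcf hpunit (fun _ : PUnit.{u+1} => T)
    (fun _ => hTfin) (fun _ => hTsub) y
    (fun S' hS'f hex => hy1 S' ⟨hS'f, by obtain ⟨_, h⟩ := hex; exact h⟩)
    ∅ (fun h => absurd h (by simp [Set.not_infinite]))
  have hζAX : ζ ∈ AXs e S := hTss (hζT PUnit.unit)
  have : (e ζ).2.1 ∈ FA κ S := hζAX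
  rw [hζy] at this
  exact hy2 this

end Distinct

/-- Nonemptiness of the index type. -/
lemma nonempty_R {κ : Cardinal.{u}} (hκ : ℵ₀ ≤ κ) : Nonempty (R κ) := by
  rw [Ordinal.toType_nonempty_iff_ne_zero]
  intro h
  rw [Cardinal.ord_eq_zero] at h
  rw [h] at hκ
  exact Cardinal.aleph0_ne_zero (le_zero_iff.1 hκ)

end ZGT

open ZGT in
/-- Let `G` be a monoid acting on a set `X`, `x₀ ∈ X`, and `κ` an infinite cardinal with
`|G| ≤ κ` such that every family `𝒰` of Zariski-open sets with `⋂ 𝒰 = {x₀}` has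
cardinality at least `κ` (i.e. `κ ≤ ψ(x₀, ζ_G)`).  Then for every infinite cardinal
`μ ≤ cf(κ)`, the set of normal `G`-topologies on `X` with pseudocharacter `μ` at `x₀`
has cardinality at least `2^(2^κ)`. -/
theorem card_normal_GTopologies_ge {G X : Type u} [Monoid G] [MulAction G X]
    (x₀ : X) (κ : Cardinal.{u}) (hκ : ℵ₀ ≤ κ) (hG : #G ≤ κ)
    (hψ : ∀ 𝒰 : Set (Set X), (∀ U ∈ 𝒰, IsOpen[zariskiGTopology G X] U) →
      ⋂₀ 𝒰 = {x₀} → κ ≤ #𝒰)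
    (μ : Cardinal.{u}) (hμ : ℵ₀ ≤ μ) (hμcf : μ ≤ κ.ord.cof) :
    (2 : Cardinal.{u}) ^ ((2 : Cardinal.{u}) ^ κ) ≤
      #{τ : TopologicalSpace X |
        (∀ g : G, Continuous[τ, τ] fun x => g • x) ∧
        (∀ y : X, IsClosed[τ] {y}) ∧
        (∀ A B : Set X, IsClosed[τ] A → IsClosed[τ] B → Disjoint A B →
          ∃ U V : Set X, IsOpen[τ] U ∧ IsOpen[τ] V ∧ A ⊆ U ∧ B ⊆ V ∧ Disjoint U V) ∧
        sInf {c : Cardinal.{u} | ∃ 𝒰 : Set (Set X),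
          (∀ U ∈ 𝒰, IsOpen[τ] U ∧ x₀ ∈ U) ∧
          ⋂₀ 𝒰 = ⋂₀ {U : Set X | IsOpen[τ] U ∧ x₀ ∈ U} ∧ #𝒰 = c} = μ} := by
  classical
  haveI : Nonempty (R κ) := nonempty_R hκ
  obtain ⟨C⟩ := core_exists κ x₀ hκ hG hψ
  have hμκ : μ ≤ κ := hμcf.trans (Ordinal.cof_ord_le κ)
  obtain ⟨e⟩ := exists_equiv κ μ hκ hμ hμκ
  have hmem : ∀ f : Set (Set κ.out), tp C e f ∈ {τ : TopologicalSpace X |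
      (∀ g : G, Continuous[τ, τ] fun x => g • x) ∧
      (∀ y : X, IsClosed[τ] {y}) ∧
      (∀ A B : Set X, IsClosed[τ] A → IsClosed[τ] B → Disjoint A B →
        ∃ U V : Set X, IsOpen[τ] U ∧ IsOpen[τ] V ∧ A ⊆ U ∧ B ⊆ V ∧ Disjoint U V) ∧
      sInf {c : Cardinal.{u} | ∃ 𝒰 : Set (Set X),
        (∀ U ∈ 𝒰, IsOpen[τ] U ∧ x₀ ∈ U) ∧
        ⋂₀ 𝒰 = ⋂₀ {U : Set X | IsOpen[τ] U ∧ x₀ ∈ U} ∧ #𝒰 = c} = μ} := by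
    intro f
    refine ⟨fun g => continuous_smul_tp C e hκ g,
      fun y => isClosed_singleton_tp C e y,
      fun A B hA hB hAB => normal_tp C e A B hA hB hAB,
      psi_eq C e hκ hμ hμcf f⟩
  have hinjle : ∀ f f' : Set (Set κ.out), tp C e f = tp C e f' → f ⊆ f' := by
    intro f f' heq S hS
    by_contra hS'
    have hopen : IsOpen[tp C e f] (Orb C (AXs e S) 0 x₀) :=
      TopologicalSpace.isOpen_generateFrom_of_mem
        (Or.inr ⟨x₀, x₀_mem_Orbit x₀, AXs e S, AXs_mem_FF e hS, 0, rfl⟩)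
    rw [heq] at hopen
    obtain ⟨B, hB, k, hsub⟩ := (isOpen_iff C e).1 hopen x₀ (self_mem_Orb C)
      (x₀_mem_Orbit x₀)
    have hBsub : B ∩ {ζ | (k : ℕ∞) ≤ nfun ζ} ⊆ AXs e S := by
      rintro ζ ⟨hζB, hζk⟩
      have h1 : C.t ζ ∈ Orb C B k x₀ := (t_mem_Orb_x₀_iff C hζk).2 hζB
      have h2 := hsub h1
      rcases mem_Orb_cases C h2 with h | ⟨_, hidx⟩
      · exact absurd h (t_ne C ζ)
      · rwa [(idx_par_eq C (t_rep C hζk)).1] at hidx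
    have hbudget : {ζ : R κ | (k : ℕ∞) ≤ nfun ζ} ∈ FF κ μ e f' := by
      obtain ⟨β, hβ⟩ := exists_nfun_ge κ hκ k
      refine Filter.mem_of_superset
        (mem_FF_of_gens κ μ e (Or.inl (Or.inl (Or.inr ⟨β, rfl⟩)))) ?_
      intro ζ hζ
      exact hβ.trans (nfun_mono hζ)
    have : AXs e S ∈ FF κ μ e f' :=
      Filter.mem_of_superset (Filter.inter_mem hB hbudget) hBsub
    exact AXs_not_mem_FF e hκ hμ hμcf hS' this
  have hinj : Function.Injective (fun f : Set (Set κ.out) => tp C e f) := by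
    intro f f' heq
    exact Set.Subset.antisymm (hinjle f f' heq) (hinjle f' f heq.symm)
  have hfinal : #(Set (Set κ.out)) ≤ #{τ : TopologicalSpace X |
      (∀ g : G, Continuous[τ, τ] fun x => g • x) ∧
      (∀ y : X, IsClosed[τ] {y}) ∧
      (∀ A B : Set X, IsClosed[τ] A → IsClosed[τ] B → Disjoint A B →
        ∃ U V : Set X, IsOpen[τ] U ∧ IsOpen[τ] V ∧ A ⊆ U ∧ B ⊆ V ∧ Disjoint U V) ∧
      sInf {c : Cardinal.{u} | ∃ 𝒰 : Set (Set X),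
        (∀ U ∈ 𝒰, IsOpen[τ] U ∧ x₀ ∈ U) ∧
        ⋂₀ 𝒰 = ⋂₀ {U : Set X | IsOpen[τ] U ∧ x₀ ∈ U} ∧ #𝒰 = c} = μ} := by
    refine Cardinal.mk_le_of_injective (f := fun f => ⟨tp C e f, hmem f⟩) ?_
    intro a b hab
    exact hinj (congrArg Subtype.val hab)
  calc (2 : Cardinal.{u}) ^ ((2 : Cardinal.{u}) ^ κ) = #(Set (Set κ.out)) := by
        rw [Cardinal.mk_set, Cardinal.mk_set, Cardinal.mk_out]
    _ ≤ _ := hfinal
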